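/- Let (Ω, ℱ, P) be a probability space with a filtration ℱ₀ ⊆ ℱ₁ ⊆ … ⊆ ℱ_N ⊆ ℱ, and let ζ₁,…,ζ_N be integrable real random variables such that for each t ∈ {1,…,N}: ζ_t is ℱ_t-measurable, E[ζ_t | ℱ_{t−1}] = 0 almost surely, and E[ exp(ζ_t² / σ_t²) | ℱ_{t−1} ] ≤ exp(1) almost surely, where σ₁,…,σ_N > 0 are deterministic constants. Then for every λ ≥ 0, P( ∑_{t=1}^{N} ζ_t > λ·√(∑_{t=1}^{N} σ_t²) ) ≤ exp(−λ²/3). -/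

import Mathlib

open MeasureTheory

section Aux

set_option maxHeartbeats 1000000

private lemma mlt_polyR (y : ℝ) (h0' : 0 ≤ y) (h1 : y ≤ 1) :
    0 ≤ 1/16 - y/6 + (179/1536) * y^2 - y^3/120
        + (729/24576 - 1/720) * y^4 - y^5/4410 := by
  nlinarith [sq_nonneg (y - 2/3), sq_nonneg y, mul_nonneg h0' h0', sq_nonneg (1-y),
    mul_nonneg (mul_nonneg h0' h0') h0', mul_nonneg (sub_nonneg.2 h1) h0',
    sq_nonneg (y - 1/2), mul_nonneg (mul_nonneg (sub_nonneg.2 h1) h0') h0']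

private lemma mlt_poly2 (u : ℝ) (hu0 : 0 ≤ u) (hu1 : u ≤ 7/9) :
    2.7182818286 * (1 + u + u^2/2 + u^3/6 + u^4/24 + u^5/120 + u^6/720 + u^7*8/35280)
      ≤ (1+u) + (1 + (9*(1+u)^2/16) + (9*(1+u)^2/16)^2/2 + (9*(1+u)^2/16)^3/6
          + (9*(1+u)^2/16)^4/24) := by
  nlinarith [sq_nonneg u, mul_nonneg hu0 hu0, sq_nonneg (u-1/2),
    mul_nonneg (mul_nonneg hu0 hu0) hu0, mul_nonneg (sub_nonneg.2 hu1) hu0,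
    mul_nonneg (mul_nonneg (sub_nonneg.2 hu1) hu0) hu0, pow_nonneg hu0 4,
    pow_nonneg hu0 5, pow_nonneg hu0 6, pow_nonneg hu0 7,
    mul_nonneg (sub_nonneg.2 hu1) (pow_nonneg hu0 3)]

private lemma mlt_key_pointwise (y : ℝ) : Real.exp y ≤ y + Real.exp (9*y^2/16) := by
  have hlow : 1 + 9*y^2/16 ≤ Real.exp (9*y^2/16) := by
    have := Real.add_one_le_exp (9*y^2/16); linarith
  rcases le_or_gt y (-1) with h | h
  · have h1 : Real.exp y ≤ Real.exp (-1) := Real.exp_le_exp.2 (by linarith)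
    have h2 : Real.exp (-1) * Real.exp 1 = 1 := by rw [← Real.exp_add]; norm_num
    have h3 : (2.7182818283 : ℝ) < Real.exp 1 := Real.exp_one_gt_d9
    have h4 : Real.exp (-1) < 1/2 := by nlinarith [Real.exp_pos (-1)]
    nlinarith [sq_nonneg (3*y + 8/3)]
  · rcases le_or_gt y 0 with h0 | h0
    · have hb := Real.exp_bound (x := y) (by rw [abs_le]; constructor <;> linarith)
        (n := 4) (by norm_num)
      rw [abs_of_nonpos h0] at hb
      simp only [Finset.sum_range_succ, Finset.sum_range_zero] at hb
      norm_num [Nat.factorial] at hb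
      have hb' := (abs_le.1 hb).2
      have hcube : y^3 + y^4 ≤ 0 := by
        nlinarith [mul_nonneg (mul_nonneg (sq_nonneg y) (neg_nonneg.2 h0))
          (by linarith : (0:ℝ) ≤ 1 + y)]
      nlinarith [sq_nonneg y, sq_nonneg (y^2)]
    · rcases le_or_gt y 1 with h1 | h1
      · have hu := Real.exp_bound' (le_of_lt h0) h1 (n := 7) (by norm_num)
        simp only [Finset.sum_range_succ, Finset.sum_range_zero] at hu
        norm_num [Nat.factorial] at hu
        have hl := Real.sum_le_exp_of_nonneg (x := 9*y^2/16) (by positivity) 4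
        simp only [Finset.sum_range_succ, Finset.sum_range_zero] at hl
        norm_num [Nat.factorial] at hl
        have hR := mlt_polyR y (le_of_lt h0) h1
        nlinarith [mul_nonneg (sq_nonneg y) hR]
      · rcases le_or_gt y (16/9) with h2 | h2
        · have hE : Real.exp y = Real.exp 1 * Real.exp (y-1) := by
            rw [← Real.exp_add]; ring_nf
          have hu := Real.exp_bound' (x := y-1) (by linarith) (by linarith)
            (n := 7) (by norm_num)
          simp only [Finset.sum_range_succ, Finset.sum_range_zero] at hu
          norm_num [Nat.factorial] at hu
          have he1 : Real.exp 1 < 2.7182818286 := Real.exp_one_lt_d9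
          have hl := Real.sum_le_exp_of_nonneg (x := 9*y^2/16) (by positivity) 5
          simp only [Finset.sum_range_succ, Finset.sum_range_zero] at hl
          norm_num [Nat.factorial] at hl
          have h3 : Real.exp y ≤ 2.7182818286 * (1 + (y-1) + (y-1)^2/2 + (y-1)^3/6
              + (y-1)^4/24 + (y-1)^5/120 + (y-1)^6/720 + (y-1)^7*8/35280) := by
            rw [hE]
            refine mul_le_mul he1.le ?_ (Real.exp_pos _).le (by norm_num)
            linarith [hu]
          have hp := mlt_poly2 (y-1) (by linarith) (by linarith)
          have h9 : (1+(y-1)) = y := by ring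
          rw [h9] at hp
          nlinarith [h3, hp, hl]
        · have : Real.exp y ≤ Real.exp (9*y^2/16) := Real.exp_le_exp.2 (by nlinarith)
          linarith

private lemma mlt_tangent_exp {θ u : ℝ} (hθ0 : 0 ≤ θ) (hθ1 : θ ≤ 1) :
    Real.exp (θ * u) ≤ Real.exp θ + θ * Real.exp (θ - 1) * (Real.exp u - Real.exp 1) := by
  have hg := Real.geom_mean_le_arith_mean2_weighted hθ0 (by linarith : (0:ℝ) ≤ 1 - θ)
    (Real.exp_pos (u-1)).le zero_le_one (by ring)
  rw [Real.one_rpow, mul_one, ← Real.exp_mul] at hg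
  have R1 : Real.exp (u-1) * Real.exp θ = Real.exp (θ-1) * Real.exp u := by
    rw [← Real.exp_add, ← Real.exp_add]; ring_nf
  have R2 : Real.exp (θ-1) * Real.exp 1 = Real.exp θ := by
    rw [← Real.exp_add]; ring_nf
  have h1 : Real.exp (θ * u) = Real.exp ((u-1) * θ) * Real.exp θ := by
    rw [← Real.exp_add]; ring_nf
  have h2 : Real.exp ((u-1) * θ) * Real.exp θ ≤ (θ * Real.exp (u-1) + (1-θ) * 1) * Real.exp θ :=
    mul_le_mul_of_nonneg_right hg (Real.exp_pos θ).le
  have h3 : (θ * Real.exp (u-1) + (1-θ) * 1) * Real.exp θ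
      = Real.exp θ + θ * Real.exp (θ - 1) * (Real.exp u - Real.exp 1) := by
    linear_combination θ * R1 + θ * R2
  linarith [h1 ▸ h2, h3 ▸ h2]

private lemma mlt_condexp_le_of_bound {Ω : Type*} {m m0 : MeasurableSpace Ω} (hm : m ≤ m0)
    (μ : Measure Ω) [IsProbabilityMeasure μ]
    {g X E : Ω → ℝ} {γ c₁ c₂ : ℝ} (hc₂ : 0 ≤ c₂)
    (hXint : Integrable X μ) (hEint : Integrable E μ)
    (hzero : μ[X|m] =ᵐ[μ] 0) (hcond : μ[E|m] ≤ᵐ[μ] fun _ => Real.exp 1)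
    (hgmeas : AEStronglyMeasurable g μ)
    (hg0 : ∀ ω, 0 ≤ g ω)
    (hle : ∀ ω, g ω ≤ c₁ + γ * X ω + c₂ * E ω) :
    Integrable g μ ∧ μ[g|m] ≤ᵐ[μ] fun _ => c₁ + c₂ * Real.exp 1 := by
  set B : Ω → ℝ := (fun _ => c₁) + γ • X + c₂ • E with hB
  have hBeval : ∀ ω, B ω = c₁ + γ * X ω + c₂ * E ω := fun ω => by
    simp [hB, Pi.add_apply, Pi.smul_apply, smul_eq_mul]
  have hB1 : Integrable ((fun (_ : Ω) => c₁) + γ • X) μ :=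
    (integrable_const c₁).add (hXint.smul γ)
  have hBint : Integrable B μ := hB1.add (hEint.smul c₂)
  have hgint : Integrable g μ := by
    refine hBint.mono' hgmeas (Filter.Eventually.of_forall fun ω => ?_)
    rw [Real.norm_eq_abs, abs_of_nonneg (hg0 ω), hBeval]
    exact hle ω
  refine ⟨hgint, ?_⟩
  have h1 : μ[g|m] ≤ᵐ[μ] μ[B|m] :=
    condExp_mono hgint hBint (Filter.Eventually.of_forall fun ω => (hle ω).trans_eq (hBeval ω).symm)
  have h2 : μ[B|m] =ᵐ[μ] μ[(fun _ => c₁) + γ • X|m] + μ[c₂ • E|m] :=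
    condExp_add hB1 (hEint.smul c₂) m
  have h3 : μ[(fun (_ : Ω) => c₁) + γ • X|m] =ᵐ[μ] μ[(fun (_ : Ω) => c₁)|m] + μ[γ • X|m] :=
    condExp_add (integrable_const c₁) (hXint.smul γ) m
  have h4 : μ[γ • X|m] =ᵐ[μ] γ • μ[X|m] := condExp_smul γ X m
  have h5 : μ[c₂ • E|m] =ᵐ[μ] c₂ • μ[E|m] := condExp_smul c₂ E m
  have h6 : μ[(fun (_ : Ω) => c₁)|m] = fun _ => c₁ := condExp_const hm c₁
  filter_upwards [h1, h2, h3, h4, h5, hzero, hcond] with ω e1 e2 e3 e4 e5 e6 e7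
  have : (μ[B|m]) ω ≤ c₁ + c₂ * Real.exp 1 := by
    rw [e2, Pi.add_apply, e3, Pi.add_apply, e4, e5, h6]
    simp only [Pi.smul_apply, smul_eq_mul, e6, Pi.zero_apply]
    have := mul_le_mul_of_nonneg_left e7 hc₂
    linarith
  exact le_trans e1 this

private lemma mlt_mgf_bound {Ω : Type*} {m m0 : MeasurableSpace Ω} (hm : m ≤ m0)
    (μ : Measure Ω) [IsProbabilityMeasure μ]
    {X : Ω → ℝ} {s : ℝ} (hs : 0 < s) (hXint : Integrable X μ)
    (hzero : μ[X|m] =ᵐ[μ] 0)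
    (hEint : Integrable (fun ω => Real.exp (X ω^2 / s^2)) μ)
    (hcond : μ[(fun ω => Real.exp (X ω^2/s^2))|m] ≤ᵐ[μ] fun _ => Real.exp 1)
    (γ : ℝ) :
    Integrable (fun ω => Real.exp (γ * X ω)) μ ∧
      μ[(fun ω => Real.exp (γ * X ω))|m] ≤ᵐ[μ] fun _ => Real.exp (3/4 * γ^2 * s^2) := by
  have hs2 : (0:ℝ) < s^2 := by positivity
  have hgmeas : AEStronglyMeasurable (fun ω => Real.exp (γ * X ω)) μ :=
    (Real.continuous_exp.comp (continuous_const.mul continuous_id)).comp_aestronglyMeasurable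
      hXint.aestronglyMeasurable
  have hg0 : ∀ ω, 0 ≤ Real.exp (γ * X ω) := fun ω => (Real.exp_pos _).le
  rcases le_or_gt (γ^2 * s^2) (16/9) with hc | hc
  · set θ : ℝ := 9 * γ^2 * s^2 / 16 with hθdef
    have hθ0 : 0 ≤ θ := by positivity
    have hθ1 : θ ≤ 1 := by rw [hθdef]; nlinarith
    have hc₂ : 0 ≤ θ * Real.exp (θ - 1) := by positivity
    have hle : ∀ ω, Real.exp (γ * X ω) ≤
        (Real.exp θ - θ * Real.exp (θ-1) * Real.exp 1) + γ * X ω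
          + (θ * Real.exp (θ-1)) * Real.exp (X ω^2 / s^2) := by
      intro ω
      have h1 := mlt_key_pointwise (γ * X ω)
      have harg : 9 * (γ * X ω)^2 / 16 = θ * (X ω^2 / s^2) := by
        rw [hθdef]; field_simp
      rw [harg] at h1
      have h2 := mlt_tangent_exp (u := X ω^2 / s^2) hθ0 hθ1
      linarith
    obtain ⟨hint, hle'⟩ := mlt_condexp_le_of_bound hm μ hc₂ hXint hEint hzero hcond hgmeas hg0 hle
    refine ⟨hint, hle'.trans (Filter.Eventually.of_forall fun ω => ?_)⟩
    have : Real.exp θ - θ * Real.exp (θ-1) * Real.exp 1 + θ * Real.exp (θ-1) * Real.exp 1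
        = Real.exp θ := by ring
    rw [this]
    apply Real.exp_le_exp.2
    rw [hθdef]; nlinarith [sq_nonneg (γ * s)]
  · set c₀ : ℝ := Real.exp (3/8 * γ^2 * s^2) with hc₀def
    have hc₀ : 0 < c₀ := Real.exp_pos _
    have hc₂ : 0 ≤ c₀ * (2/3 * Real.exp (2/3 - 1)) := by positivity
    have hle : ∀ ω, Real.exp (γ * X ω) ≤
        (c₀ * (Real.exp (2/3) - 2/3 * Real.exp (2/3-1) * Real.exp 1)) + (0:ℝ) * X ω
          + (c₀ * (2/3 * Real.exp (2/3 - 1))) * Real.exp (X ω^2 / s^2) := by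
      intro ω
      have key : γ * X ω * s^2 ≤ 3/8 * γ^2 * s^2 * s^2 + 2/3 * X ω^2 := by
        nlinarith [sq_nonneg (3 * γ * s^2 - 4 * X ω)]
      have hdiv : 2/3 * (X ω^2 / s^2) * s^2 = 2/3 * X ω^2 := by field_simp
      have h1 : γ * X ω ≤ 3/8 * γ^2 * s^2 + 2/3 * (X ω^2 / s^2) := by nlinarith
      have h2 : Real.exp (γ * X ω) ≤ c₀ * Real.exp (2/3 * (X ω^2 / s^2)) := by
        rw [hc₀def, ← Real.exp_add]
        exact Real.exp_le_exp.2 h1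
      have h3 := mlt_tangent_exp (θ := 2/3) (u := X ω^2 / s^2) (by norm_num) (by norm_num)
      have h4 := mul_le_mul_of_nonneg_left h3 hc₀.le
      calc Real.exp (γ * X ω) ≤ c₀ * Real.exp (2/3 * (X ω^2 / s^2)) := h2
        _ ≤ c₀ * (Real.exp (2/3) + 2/3 * Real.exp (2/3 - 1) * (Real.exp (X ω^2/s^2) - Real.exp 1)) := h4
        _ = (c₀ * (Real.exp (2/3) - 2/3 * Real.exp (2/3-1) * Real.exp 1)) + (0:ℝ) * X ω
            + (c₀ * (2/3 * Real.exp (2/3 - 1))) * Real.exp (X ω^2 / s^2) := by ring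
    obtain ⟨hint, hle'⟩ := mlt_condexp_le_of_bound hm μ hc₂ hXint hEint hzero hcond hgmeas hg0 hle
    refine ⟨hint, hle'.trans (Filter.Eventually.of_forall fun ω => ?_)⟩
    have he : c₀ * (Real.exp (2/3) - 2/3 * Real.exp (2/3-1) * Real.exp 1)
        + c₀ * (2/3 * Real.exp (2/3 - 1)) * Real.exp 1 = c₀ * Real.exp (2/3) := by ring
    rw [he, hc₀def, ← Real.exp_add]
    apply Real.exp_le_exp.2
    linarith

private lemma mlt_integral_mul_le {Ω : Type*} {m m0 : MeasurableSpace Ω} (hm : m ≤ m0)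
    (μ : Measure Ω) [IsProbabilityMeasure μ] {f g : Ω → ℝ} {C : ℝ} (hC : 0 ≤ C)
    (hfmeas : StronglyMeasurable[m] f) (hf0 : ∀ ω, 0 ≤ f ω) (hfint : Integrable f μ)
    (hg0 : ∀ ω, 0 ≤ g ω) (hgint : Integrable g μ)
    (hcond : μ[g|m] ≤ᵐ[μ] fun _ => C) :
    Integrable (f * g) μ ∧ ∫ ω, f ω * g ω ∂μ ≤ C * ∫ ω, f ω ∂μ := by
  have hfm0 : AEStronglyMeasurable f μ := (hfmeas.mono hm).aestronglyMeasurable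
  set gK : ℕ → Ω → ℝ := fun K ω => min (g ω) K with hgKdef
  have hgK_meas : ∀ K : ℕ, AEStronglyMeasurable (gK K) μ := fun K =>
    hgint.aestronglyMeasurable.inf aestronglyMeasurable_const
  have hgK0 : ∀ K (ω : Ω), 0 ≤ gK K ω := fun K ω =>
    le_min (hg0 ω) (Nat.cast_nonneg K)
  have hgK_int : ∀ K : ℕ, Integrable (gK K) μ := fun K => by
    refine hgint.mono (hgK_meas K) (Filter.Eventually.of_forall fun ω => ?_)
    rw [Real.norm_eq_abs, Real.norm_eq_abs, abs_of_nonneg (hgK0 K ω), abs_of_nonneg (hg0 ω)]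
    exact min_le_left _ _
  have hfgK_int : ∀ K : ℕ, Integrable (f * gK K) μ := fun K => by
    refine (hfint.smul (K:ℝ)).mono' (hfm0.mul (hgK_meas K))
      (Filter.Eventually.of_forall fun ω => ?_)
    simp only [Pi.mul_apply, Pi.smul_apply, smul_eq_mul, Real.norm_eq_abs]
    rw [abs_of_nonneg (mul_nonneg (hf0 ω) (hgK0 K ω))]
    calc f ω * gK K ω ≤ f ω * K := mul_le_mul_of_nonneg_left (min_le_right _ _) (hf0 ω)
      _ = (K:ℝ) * f ω := by ring
  have hI : ∀ K : ℕ, ∫ ω, (f * gK K) ω ∂μ ≤ C * ∫ ω, f ω ∂μ := by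
    intro K
    have pull := condExp_mul_of_stronglyMeasurable_left hfmeas (hfgK_int K) (hgK_int K)
    have hKmono : μ[gK K|m] ≤ᵐ[μ] μ[g|m] :=
      condExp_mono (hgK_int K) hgint (Filter.Eventually.of_forall fun ω => min_le_left _ _)
    have hc2 : (f * μ[gK K|m]) ≤ᵐ[μ] C • f := by
      filter_upwards [hKmono, hcond] with ω h1 h2
      simp only [Pi.mul_apply, Pi.smul_apply, smul_eq_mul]
      calc f ω * (μ[gK K|m]) ω ≤ f ω * C :=
            mul_le_mul_of_nonneg_left (h1.trans h2) (hf0 ω)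
        _ = C * f ω := by ring
    calc ∫ ω, (f * gK K) ω ∂μ = ∫ ω, (μ[f * gK K|m]) ω ∂μ :=
          (integral_condExp hm).symm
      _ = ∫ ω, (f * μ[gK K|m]) ω ∂μ := integral_congr_ae pull
      _ ≤ ∫ ω, (C • f) ω ∂μ :=
          integral_mono_ae (integrable_condExp.congr pull) (hfint.smul C) hc2
      _ = C * ∫ ω, f ω ∂μ := by
          simp only [Pi.smul_apply, smul_eq_mul]
          exact integral_const_mul C f
  have hfg0 : ∀ ω, 0 ≤ (f * g) ω := fun ω => mul_nonneg (hf0 ω) (hg0 ω)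
  have hfg_meas : AEStronglyMeasurable (f * g) μ := hfm0.mul hgint.aestronglyMeasurable
  have hsup : ∀ ω, (⨆ K : ℕ, ENNReal.ofReal (f ω * gK K ω)) = ENNReal.ofReal (f ω * g ω) := by
    intro ω
    refine le_antisymm (iSup_le fun K => ENNReal.ofReal_le_ofReal
      (mul_le_mul_of_nonneg_left (min_le_left _ _) (hf0 ω))) ?_
    refine le_iSup_of_le ⌈g ω⌉₊ (le_of_eq ?_)
    rw [hgKdef]; simp only
    rw [min_eq_left (Nat.le_ceil _)]
  have hmono' : ∀ ω, Monotone fun K : ℕ => ENNReal.ofReal (f ω * gK K ω) := by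
    intro ω a b hab
    refine ENNReal.ofReal_le_ofReal (mul_le_mul_of_nonneg_left ?_ (hf0 ω))
    exact min_le_min le_rfl (Nat.cast_le.2 hab)
  have hmeasK : ∀ K : ℕ, AEMeasurable (fun ω => ENNReal.ofReal (f ω * gK K ω)) μ := fun K =>
    ENNReal.measurable_ofReal.comp_aemeasurable
      ((hfm0.mul (hgK_meas K)).aemeasurable)
  have hMCT := lintegral_iSup' hmeasK (Filter.Eventually.of_forall hmono')
  have hlint : ∫⁻ ω, ENNReal.ofReal (f ω * g ω) ∂μ ≤ ENNReal.ofReal (C * ∫ ω, f ω ∂μ) := by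
    rw [← lintegral_congr hsup, hMCT]
    refine iSup_le fun K => ?_
    have hor := ofReal_integral_eq_lintegral_ofReal (hfgK_int K)
      (Filter.Eventually.of_forall fun ω => mul_nonneg (hf0 ω) (hgK0 K ω) :
        0 ≤ᵐ[μ] (f * gK K))
    simp only [Pi.mul_apply] at hor
    rw [← hor]
    exact ENNReal.ofReal_le_ofReal (hI K)
  have hfgint : Integrable (f * g) μ := by
    refine ⟨hfg_meas, ?_⟩
    rw [hasFiniteIntegral_iff_ofReal (Filter.Eventually.of_forall hfg0)]
    exact lt_of_le_of_lt hlint ENNReal.ofReal_lt_top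
  refine ⟨hfgint, ?_⟩
  have hieq : ∫ ω, f ω * g ω ∂μ = (∫⁻ ω, ENNReal.ofReal (f ω * g ω) ∂μ).toReal :=
    integral_eq_lintegral_of_nonneg_ae (Filter.Eventually.of_forall hfg0) hfg_meas
  rw [hieq]
  calc (∫⁻ ω, ENNReal.ofReal (f ω * g ω) ∂μ).toReal
      ≤ (ENNReal.ofReal (C * ∫ ω, f ω ∂μ)).toReal :=
        ENNReal.toReal_mono ENNReal.ofReal_ne_top hlint
    _ = C * ∫ ω, f ω ∂μ := ENNReal.toReal_ofReal
        (mul_nonneg hC (integral_nonneg hf0))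

end Aux

/-- Sub-Gaussian martingale-difference tail bound.  If
`ζ₁, …, ζ_N` are adapted to the filtration `𝒢`, have zero conditional mean, and
satisfy the conditional light-tail bound
`E[exp(ζ_t²/σ_t²) | 𝒢_{t-1}] ≤ exp 1` a.s., then for every `λ ≥ 0`,
`P(∑ ζ_t > λ·√(∑ σ_t²)) ≤ exp(-λ²/3)`. -/
theorem martingale_light_tail_bound
    {Ω : Type*} {m0 : MeasurableSpace Ω} (μ : Measure Ω) [IsProbabilityMeasure μ]
    (N : ℕ) (𝒢 : ℕ → MeasurableSpace Ω)
    (h𝒢mono : Monotone 𝒢) (h𝒢le : ∀ t, 𝒢 t ≤ m0)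
    (ζ : ℕ → Ω → ℝ) (σ : ℕ → ℝ) (hσ : ∀ t ∈ Finset.Icc 1 N, 0 < σ t)
    (hint : ∀ t ∈ Finset.Icc 1 N, Integrable (ζ t) μ)
    (hadapted : ∀ t ∈ Finset.Icc 1 N, StronglyMeasurable[𝒢 t] (ζ t))
    (hcondzero : ∀ t ∈ Finset.Icc 1 N, μ[ζ t | 𝒢 (t - 1)] =ᵐ[μ] 0)
    (hexpint : ∀ t ∈ Finset.Icc 1 N,
      Integrable (fun ω => Real.exp ((ζ t ω) ^ 2 / (σ t) ^ 2)) μ)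
    (hcondexp : ∀ t ∈ Finset.Icc 1 N,
      μ[(fun ω => Real.exp ((ζ t ω) ^ 2 / (σ t) ^ 2)) | 𝒢 (t - 1)]
        ≤ᵐ[μ] fun _ => Real.exp 1) :
    ∀ lam : ℝ, 0 ≤ lam →
      μ {ω | lam * Real.sqrt (∑ t ∈ Finset.Icc 1 N, (σ t) ^ 2)
          < ∑ t ∈ Finset.Icc 1 N, ζ t ω}
        ≤ ENNReal.ofReal (Real.exp (-lam ^ 2 / 3)) := by
  intro lam hlam
  rcases Nat.eq_zero_or_pos N with hN0 | hNpos
  · subst hN0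
    simp only [show Finset.Icc 1 0 = (∅ : Finset ℕ) from rfl, Finset.sum_empty]
    have : {ω : Ω | lam * Real.sqrt 0 < (0:ℝ)} = ∅ := by
      ext ω; simp [Real.sqrt_zero]
    rw [this]
    simp
  · set V : ℝ := ∑ t ∈ Finset.Icc 1 N, (σ t)^2 with hVdef
    have hVpos : 0 < V := by
      refine Finset.sum_pos (fun t ht => pow_pos (hσ t ht) 2) ?_
      exact ⟨1, Finset.mem_Icc.2 ⟨le_refl 1, hNpos⟩⟩
    have hsV : 0 < Real.sqrt V := Real.sqrt_pos.2 hVpos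
    have hsV2 : Real.sqrt V ^ 2 = V := Real.sq_sqrt hVpos.le
    set γ : ℝ := 2 * lam / (3 * Real.sqrt V) with hγdef
    have hγ0 : 0 ≤ γ := by positivity
    -- the induction
    have main : ∀ n, n ≤ N →
        Integrable (fun ω => Real.exp (γ * ∑ t ∈ Finset.Icc 1 n, ζ t ω)) μ ∧
          ∫ ω, Real.exp (γ * ∑ t ∈ Finset.Icc 1 n, ζ t ω) ∂μ
            ≤ Real.exp (3/4 * γ^2 * ∑ t ∈ Finset.Icc 1 n, (σ t)^2) := by
      intro n
      induction n with
      | zero =>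
        intro _
        simp only [show Finset.Icc 1 0 = (∅ : Finset ℕ) from rfl, Finset.sum_empty,
          mul_zero, Real.exp_zero]
        constructor
        · exact integrable_const 1
        · simp [Real.exp_nonneg]
      | succ n ih =>
        intro hn1
        have hn : n ≤ N := Nat.le_of_succ_le hn1
        obtain ⟨ihInt, ihBound⟩ := ih hn
        have hmem : n + 1 ∈ Finset.Icc 1 N := Finset.mem_Icc.2 ⟨Nat.succ_le_succ (Nat.zero_le n), hn1⟩
        have hpred : (n + 1) - 1 = n := rfl
        -- mgf bound for step n+1
        have hmgf := mlt_mgf_bound (h𝒢le n) μ (hσ _ hmem) (hint _ hmem)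
          (by rw [← hpred]; exact hcondzero _ hmem)
          (hexpint _ hmem)
          (by rw [← hpred]; exact hcondexp _ hmem) γ
        obtain ⟨hgInt, hgCond⟩ := hmgf
        -- f is 𝒢 n measurable
        have hSmeas : StronglyMeasurable[𝒢 n] (fun ω => ∑ t ∈ Finset.Icc 1 n, ζ t ω) := by
          apply Finset.stronglyMeasurable_fun_sum
          intro t ht
          have ht' : t ≤ n := (Finset.mem_Icc.1 ht).2
          have htN : t ∈ Finset.Icc 1 N :=
            Finset.mem_Icc.2 ⟨(Finset.mem_Icc.1 ht).1, le_trans ht' hn⟩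
          exact (hadapted t htN).mono (h𝒢mono ht')
        have hfmeas : StronglyMeasurable[𝒢 n]
            (fun ω => Real.exp (γ * ∑ t ∈ Finset.Icc 1 n, ζ t ω)) :=
          (Real.continuous_exp.comp_stronglyMeasurable (hSmeas.const_mul γ))
        have hprod := mlt_integral_mul_le (h𝒢le n) μ (Real.exp_nonneg _)
          hfmeas (fun ω => Real.exp_nonneg _) ihInt
          (fun ω => Real.exp_nonneg _) hgInt hgCond
        obtain ⟨hprodInt, hprodBound⟩ := hprod
        have hsplit : ∀ ω, Real.exp (γ * ∑ t ∈ Finset.Icc 1 (n+1), ζ t ω)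
            = Real.exp (γ * ∑ t ∈ Finset.Icc 1 n, ζ t ω) * Real.exp (γ * ζ (n+1) ω) := by
          intro ω
          rw [Finset.sum_Icc_succ_top (Nat.succ_le_succ (Nat.zero_le n)), ← Real.exp_add]
          ring_nf
        constructor
        · refine hprodInt.congr (Filter.Eventually.of_forall fun ω => ?_)
          rw [Pi.mul_apply, ← hsplit ω]
        · have heq : ∫ ω, Real.exp (γ * ∑ t ∈ Finset.Icc 1 (n+1), ζ t ω) ∂μ
              = ∫ ω, Real.exp (γ * ∑ t ∈ Finset.Icc 1 n, ζ t ω) * Real.exp (γ * ζ (n+1) ω) ∂μ :=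
            integral_congr_ae (Filter.Eventually.of_forall fun ω => hsplit ω)
          rw [heq]
          calc ∫ ω, Real.exp (γ * ∑ t ∈ Finset.Icc 1 n, ζ t ω) * Real.exp (γ * ζ (n+1) ω) ∂μ
              ≤ Real.exp (3/4 * γ^2 * (σ (n+1))^2)
                * ∫ ω, Real.exp (γ * ∑ t ∈ Finset.Icc 1 n, ζ t ω) ∂μ := hprodBound
            _ ≤ Real.exp (3/4 * γ^2 * (σ (n+1))^2)
                * Real.exp (3/4 * γ^2 * ∑ t ∈ Finset.Icc 1 n, (σ t)^2) :=
                mul_le_mul_of_nonneg_left ihBound (Real.exp_nonneg _)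
            _ = Real.exp (3/4 * γ^2 * ∑ t ∈ Finset.Icc 1 (n+1), (σ t)^2) := by
                rw [← Real.exp_add, Finset.sum_Icc_succ_top (Nat.succ_le_succ (Nat.zero_le n))]
                ring_nf
    obtain ⟨hGint, hGbound⟩ := main N le_rfl
    -- Chernoff
    set ε : ℝ := Real.exp (γ * (lam * Real.sqrt V)) with hεdef
    have hε : 0 < ε := Real.exp_pos _
    have hmarkov := mul_meas_ge_le_integral_of_nonneg
      (Filter.Eventually.of_forall fun ω => Real.exp_nonneg (γ * ∑ t ∈ Finset.Icc 1 N, ζ t ω))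
      hGint ε
    have hsubset : {ω : Ω | lam * Real.sqrt V < ∑ t ∈ Finset.Icc 1 N, ζ t ω}
        ⊆ {ω | ε ≤ Real.exp (γ * ∑ t ∈ Finset.Icc 1 N, ζ t ω)} := by
      intro ω hω
      simp only [Set.mem_setOf_eq] at hω ⊢
      rw [hεdef]
      apply Real.exp_le_exp.2
      exact mul_le_mul_of_nonneg_left (by linarith) hγ0
    have hμfin : μ {ω : Ω | lam * Real.sqrt V < ∑ t ∈ Finset.Icc 1 N, ζ t ω} ≠ ⊤ :=
      measure_ne_top μ _
    rw [ENNReal.le_ofReal_iff_toReal_le hμfin (Real.exp_nonneg _)]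
    have h1 : (μ {ω : Ω | lam * Real.sqrt V < ∑ t ∈ Finset.Icc 1 N, ζ t ω}).toReal
        ≤ (μ {ω : Ω | ε ≤ Real.exp (γ * ∑ t ∈ Finset.Icc 1 N, ζ t ω)}).toReal :=
      ENNReal.toReal_mono (measure_ne_top μ _) (measure_mono hsubset)
    have h2 : (μ {ω : Ω | ε ≤ Real.exp (γ * ∑ t ∈ Finset.Icc 1 N, ζ t ω)}).toReal
        ≤ (∫ ω, Real.exp (γ * ∑ t ∈ Finset.Icc 1 N, ζ t ω) ∂μ) / ε := by
      rw [le_div_iff₀ hε]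
      rw [measureReal_def] at hmarkov
      linarith [hmarkov]
    have h3 : (∫ ω, Real.exp (γ * ∑ t ∈ Finset.Icc 1 N, ζ t ω) ∂μ) / ε
        ≤ Real.exp (3/4 * γ^2 * V) / ε :=
      (div_le_div_iff_of_pos_right hε).2 hGbound
    have h4 : Real.exp (3/4 * γ^2 * V) / ε = Real.exp (3/4 * γ^2 * V - γ * (lam * Real.sqrt V)) := by
      rw [hεdef, ← Real.exp_sub]
    have h5 : 3/4 * γ^2 * V - γ * (lam * Real.sqrt V) = -lam^2/3 := by
      rw [hγdef]
      field_simp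
      linear_combination (-4 * lam^2) * hsV2
    rw [h5] at h4
    linarith
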